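/- Let σ be a lock-well-formed execution, S a set of read/write events of σ, and e1, e2 events of σ; let t1 = ThreadOf(e1) and let k = U(e1)(t1) − U(e2)(t1) (an integer). Then the number of threads t ∈ Threads(σ) such that Csmp(e1)(t) > Csmp(e2)(t) is at most min(|Threads(σ)|, max(k, 0)). -/

import Mathlib

open scoped Classical

noncomputable section

/-- An operation: read/write of a memory location, or acquire/release of a lock. -/
inductive Op : Type where
  | read (x : ℕ)
  | write (x : ℕ)
  | acq (l : ℕ)
  | rel (l : ℕ)
  deriving DecidableEq

/-- An execution: a finite sequence of (pairwise-distinct) events, each with a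
thread identifier and an operation.  Events are identified with their index
in the sequence, so trace order is the order on `Fin n`. -/
structure Execution : Type where
  n : ℕ
  thread : Fin n → ℕ
  op : Fin n → Op

/-- `o` is a release operation. -/
def Op.isRel (o : Op) : Prop := ∃ l, o = Op.rel l

/-- `o` is a read or write operation. -/
def Op.isAccess (o : Op) : Prop := ∃ x, o = Op.read x ∨ o = Op.write x

/-- `o` accesses memory location `x`. -/
def Op.accesses (o : Op) (x : ℕ) : Prop := o = Op.read x ∨ o = Op.write x

namespace Execution

/-- Event `e` operates on lock `l`. -/
def touches (σ : Execution) (l : ℕ) (e : Fin σ.n) : Prop :=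
  σ.op e = Op.acq l ∨ σ.op e = Op.rel l

/-- Lock-well-formedness: for every lock `l`, the subsequence of events on `l`
alternates acquires and releases beginning with an acquire (an event on `l` is
an acquire iff an even number of events on `l` precede it), and each release of
`l` is performed by the same thread as the immediately preceding acquire of `l`. -/
def LockWellFormed (σ : Execution) : Prop :=
  ∀ l : ℕ, ∀ e : Fin σ.n, σ.touches l e →
    ((σ.op e = Op.acq l ↔
        Even ((Finset.univ.filter (fun f => f < e ∧ σ.touches l f)).card)) ∧
     (σ.op e = Op.rel l →
        ∃ f : Fin σ.n, f < e ∧ σ.op f = Op.acq l ∧ σ.thread f = σ.thread e ∧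
          ∀ g : Fin σ.n, f < g → g < e → ¬ σ.touches l g))

/-- Nonstrict thread order `e1 ≤tho e2`. -/
def tho (σ : Execution) (e1 e2 : Fin σ.n) : Prop :=
  e1 ≤ e2 ∧ σ.thread e1 = σ.thread e2

/-- Strict thread order `e1 <tho e2`. -/
def sTho (σ : Execution) (e1 e2 : Fin σ.n) : Prop :=
  e1 < e2 ∧ σ.thread e1 = σ.thread e2

/-- One step of happens-before: thread order, or a release–acquire edge. -/
def hbStep (σ : Execution) (e1 e2 : Fin σ.n) : Prop :=
  σ.tho e1 e2 ∨ (e1 < e2 ∧ ∃ l, σ.op e1 = Op.rel l ∧ σ.op e2 = Op.acq l)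

/-- Happens-before: reflexive-transitive closure of thread order together
with release–acquire edges. -/
def hb (σ : Execution) : Fin σ.n → Fin σ.n → Prop :=
  Relation.ReflTransGen σ.hbStep

/-- The (finite) set of threads of the events of `σ`. -/
def threads (σ : Execution) : Finset ℕ :=
  Finset.univ.image σ.thread

/-- Local time `Lft(e)`: 1 plus the number of release events thread-order
before `e`. -/
def Lft (σ : Execution) (e : Fin σ.n) : ℕ :=
  (Finset.univ.filter (fun f => (σ.op f).isRel ∧ σ.sTho f e)).card + 1

/-- FastTrack timestamp `Cft(e)(t)`: max of `Lft(f)` over events `f` of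
thread `t` with `f ≤HB e` (0 if there are none). -/
def Cft (σ : Execution) (e : Fin σ.n) (t : ℕ) : ℕ :=
  (Finset.univ.filter (fun f => σ.thread f = t ∧ σ.hb f e)).sup σ.Lft

/-- `T1 ⊑ T2`: pointwise comparison over the threads of `σ`. -/
def VCle (σ : Execution) (T1 T2 : ℕ → ℕ) : Prop :=
  ∀ t ∈ σ.threads, T1 t ≤ T2 t

/-- `(e1, e2)` is a conflicting pair (with `e1 <tr e2`). -/
def Conflicting (σ : Execution) (e1 e2 : Fin σ.n) : Prop :=
  e1 < e2 ∧ σ.thread e1 ≠ σ.thread e2 ∧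
    ∃ x, (σ.op e1).accesses x ∧ (σ.op e2).accesses x ∧
      (σ.op e1 = Op.write x ∨ σ.op e2 = Op.write x)

/-- `(e1, e2)` is an HB-race. -/
def HBRace (σ : Execution) (e1 e2 : Fin σ.n) : Prop :=
  σ.Conflicting e1 e2 ∧ ¬ σ.hb e1 e2

/-- `RelAfter S`: release events that are the first release after some
sampled event, in the same thread. -/
def RelAfter (σ : Execution) (S : Finset (Fin σ.n)) : Finset (Fin σ.n) :=
  Finset.univ.filter (fun f => (σ.op f).isRel ∧
    ∃ e ∈ S, σ.sTho e f ∧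
      ∀ g : Fin σ.n, (σ.op g).isRel → σ.sTho e g → ¬ σ.sTho g f)

/-- Sampling local time `Lsmp(e)`: 1 plus the number of events of `RelAfter S`
thread-order before `e`. -/
def Lsmp (σ : Execution) (S : Finset (Fin σ.n)) (e : Fin σ.n) : ℕ :=
  ((σ.RelAfter S).filter (fun f => σ.sTho f e)).card + 1

/-- Sampling timestamp `Csmp(e)(t)`: max of `Lsmp(f)` over sampled events `f`
of thread `t` with `f ≤HB e` (0 if there are none). -/
def Csmp (σ : Execution) (S : Finset (Fin σ.n)) (e : Fin σ.n) (t : ℕ) : ℕ :=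
  (S.filter (fun f => σ.thread f = t ∧ σ.hb f e)).sup (σ.Lsmp S)

/-- `Csmp⁻(f)`: the sampling timestamp of the immediate thread-order
predecessor of `f`, or the all-zero timestamp if `f` is the first event of
its thread. -/
def CsmpPrev (σ : Execution) (S : Finset (Fin σ.n)) (f : Fin σ.n) : ℕ → ℕ :=
  if h : ∃ f' : Fin σ.n, σ.sTho f' f ∧ ∀ g : Fin σ.n, σ.sTho f' g → ¬ σ.sTho g f
  then σ.Csmp S h.choose
  else fun _ => 0

/-- `VT(e)`: total number of component updates of the sampling timestamp along
the thread of `e`, up to and including `e`. -/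
def VT (σ : Execution) (S : Finset (Fin σ.n)) (e : Fin σ.n) : ℕ :=
  ∑ f ∈ Finset.univ.filter (fun f => σ.tho f e),
    ((σ.threads).filter (fun t => σ.Csmp S f t ≠ σ.CsmpPrev S f t)).card

/-- Freshness timestamp `U(e)(t)`: max of `VT(f)` over events `f` of thread
`t` with `f ≤HB e` (0 if there are none). -/
def Ufr (σ : Execution) (S : Finset (Fin σ.n)) (e : Fin σ.n) (t : ℕ) : ℕ :=
  (Finset.univ.filter (fun f => σ.thread f = t ∧ σ.hb f e)).sup (σ.VT S)

end Execution

namespace Execution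

variable {σ : Execution} {S : Finset (Fin σ.n)}

lemma tho_refl (e : Fin σ.n) : σ.tho e e := ⟨le_refl _, rfl⟩

lemma tho_trans {a b c : Fin σ.n} (h1 : σ.tho a b) (h2 : σ.tho b c) : σ.tho a c :=
  ⟨le_trans h1.1 h2.1, h1.2.trans h2.2⟩

lemma hbStep_le {a b : Fin σ.n} (h : σ.hbStep a b) : a ≤ b := by
  rcases h with h | h
  · exact h.1
  · exact le_of_lt h.1

lemma hb_le {a b : Fin σ.n} (h : σ.hb a b) : a ≤ b := by
  induction h with
  | refl => exact le_refl _
  | tail _ h2 ih => exact le_trans ih (hbStep_le h2)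

lemma hb_of_tho {a b : Fin σ.n} (h : σ.tho a b) : σ.hb a b :=
  Relation.ReflTransGen.single (Or.inl h)

lemma csmp_mono {a b : Fin σ.n} {t : ℕ} (h : σ.hb a b) :
    σ.Csmp S a t ≤ σ.Csmp S b t := by
  apply Finset.sup_mono
  intro f hf
  simp only [Finset.mem_filter] at hf ⊢
  exact ⟨hf.1, hf.2.1, hf.2.2.trans h⟩

lemma vt_mono {a b : Fin σ.n} (h : σ.tho a b) : σ.VT S a ≤ σ.VT S b := by
  apply Finset.sum_le_sum_of_subset
  intro f hf
  simp only [Finset.mem_filter, Finset.mem_univ, true_and] at hf ⊢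
  exact tho_trans hf h

lemma csmpPrev_eq {f' f : Fin σ.n} (h1 : σ.sTho f' f)
    (h2 : ∀ g, σ.sTho f' g → ¬ σ.sTho g f) :
    σ.CsmpPrev S f = σ.Csmp S f' := by
  have hex : ∃ f'' : Fin σ.n, σ.sTho f'' f ∧ ∀ g : Fin σ.n, σ.sTho f'' g → ¬ σ.sTho g f :=
    ⟨f', h1, h2⟩
  rw [CsmpPrev, dif_pos hex]
  obtain ⟨h1', h2'⟩ := hex.choose_spec
  rcases lt_trichotomy hex.choose f' with h | h | h
  · exact absurd h1 (h2' f' ⟨h, hex.choose_spec.1.2.trans h1.2.symm⟩)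
  · rw [h]
  · exact absurd h1' (h2 hex.choose ⟨h, h1.2.trans h1'.2.symm⟩)

lemma csmpPrev_eq_zero {f : Fin σ.n} (h : ∀ g, ¬ σ.sTho g f) :
    σ.CsmpPrev S f = fun _ => 0 := by
  rw [CsmpPrev, dif_neg]
  rintro ⟨f', hf', -⟩
  exact h f' hf'

/-- existence of immediate thread-order predecessor above a given `g` -/
lemma exists_imm_pred {g f : Fin σ.n} (h : σ.sTho g f) :
    ∃ f', σ.sTho f' f ∧ g ≤ f' ∧ ∀ h', σ.sTho f' h' → ¬ σ.sTho h' f := by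
  set B := Finset.univ.filter (fun g' => σ.sTho g' f) with hB
  have hgB : g ∈ B := by simp [hB, h]
  have hne : B.Nonempty := ⟨g, hgB⟩
  refine ⟨B.max' hne, ?_, Finset.le_max' B g hgB, ?_⟩
  · have := B.max'_mem hne
    simpa [hB] using this
  · intro h' hh1 hh2
    have : h' ∈ B := by simp [hB, hh2]
    exact absurd (Finset.le_max' B h' this) (not_le.mpr hh1.1)

lemma exists_update_of_ne_zero :
    ∀ e : Fin σ.n, ∀ t : ℕ, σ.Csmp S e t ≠ 0 →
      ∃ f, σ.tho f e ∧ σ.Csmp S f t ≠ σ.CsmpPrev S f t := by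
  intro e
  induction e using WellFoundedLT.induction with
  | _ e ih =>
    intro t hne
    by_cases hupd : σ.Csmp S e t ≠ σ.CsmpPrev S e t
    · exact ⟨e, tho_refl e, hupd⟩
    · push_neg at hupd
      by_cases hpred : ∃ g, σ.sTho g e
      · obtain ⟨g, hg⟩ := hpred
        obtain ⟨f', hf'1, _, hf'3⟩ := exists_imm_pred hg
        have hC : σ.CsmpPrev S e = σ.Csmp S f' := csmpPrev_eq hf'1 hf'3
        have : σ.Csmp S f' t ≠ 0 := by rw [← hC, ← hupd]; exact hne
        obtain ⟨f, hf1, hf2⟩ := ih f' hf'1.1 t this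
        exact ⟨f, tho_trans hf1 ⟨le_of_lt hf'1.1, hf'1.2⟩, hf2⟩
      · push_neg at hpred
        have hC : σ.CsmpPrev S e = fun _ => 0 := csmpPrev_eq_zero hpred
        rw [hupd, hC] at hne
        exact absurd rfl hne

lemma exists_update_of_ne :
    ∀ e : Fin σ.n, ∀ g : Fin σ.n, ∀ t : ℕ, σ.sTho g e →
      σ.Csmp S g t ≠ σ.Csmp S e t →
      ∃ f, g < f ∧ σ.tho f e ∧ σ.Csmp S f t ≠ σ.CsmpPrev S f t := by
  intro e
  induction e using WellFoundedLT.induction with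
  | _ e ih =>
    intro g t hg hne
    by_cases hupd : σ.Csmp S e t ≠ σ.CsmpPrev S e t
    · exact ⟨e, hg.1, tho_refl e, hupd⟩
    · push_neg at hupd
      obtain ⟨f', hf'1, hgf', hf'3⟩ := exists_imm_pred hg
      have hC : σ.CsmpPrev S e = σ.Csmp S f' := csmpPrev_eq hf'1 hf'3
      rcases eq_or_lt_of_le hgf' with heq | hlt
      · exfalso
        apply hne
        rw [hupd, hC, heq]
      · have hgf'tho : σ.sTho g f' := ⟨hlt, hg.2.trans hf'1.2.symm⟩
        have hne' : σ.Csmp S g t ≠ σ.Csmp S f' t := by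
          rw [← hC, ← hupd]; exact hne
        obtain ⟨f, hf1, hf2, hf3⟩ := ih f' hf'1.1 g t hgf'tho hne'
        exact ⟨f, hf1, tho_trans hf2 ⟨le_of_lt hf'1.1, hf'1.2⟩, hf3⟩

lemma card_le_sum_updates {T : Finset ℕ} {D : Finset (Fin σ.n)}
    (h : ∀ t ∈ T, t ∈ σ.threads ∧ ∃ f ∈ D, σ.Csmp S f t ≠ σ.CsmpPrev S f t) :
    T.card ≤ ∑ f ∈ D, ((σ.threads).filter (fun t => σ.Csmp S f t ≠ σ.CsmpPrev S f t)).card := by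
  classical
  rcases T.eq_empty_or_nonempty with rfl | ⟨t0, ht0⟩
  · simp
  · obtain ⟨f0, hf0, -⟩ := (h t0 ht0).2
    rw [← Finset.card_sigma]
    set F : ℕ → Fin σ.n := fun t => if ht : t ∈ T then (h t ht).2.choose else f0 with hF
    apply Finset.card_le_card_of_injOn (fun t => ⟨F t, t⟩)
    · intro t ht
      simp only [Finset.mem_coe, Finset.mem_sigma] at ht ⊢
      have hspec := (h t ht).2.choose_spec
      constructor
      · simp only [hF, dif_pos ht]; exact hspec.1
      · simp only [hF, dif_pos ht, Finset.mem_filter]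
        exact ⟨(h t ht).1, hspec.2⟩
    · intro a _ b _ hab
      exact congrArg Sigma.snd hab

end Execution

/-- With `t1 = ThreadOf e1` and
`k = U(e1)(t1) − U(e2)(t1)` (as an integer), the number of threads `t` with
`Csmp(e1)(t) > Csmp(e2)(t)` is at most `min(|Threads σ|, max(k, 0))`. -/
theorem stmt17 (σ : Execution) (hwf : σ.LockWellFormed)
    (S : Finset (Fin σ.n)) (hS : ∀ e ∈ S, (σ.op e).isAccess)
    (e1 e2 : Fin σ.n) (k : ℤ)
    (hk : k = (σ.Ufr S e1 (σ.thread e1) : ℤ) - (σ.Ufr S e2 (σ.thread e1) : ℤ)) :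
    (((σ.threads).filter (fun t => σ.Csmp S e2 t < σ.Csmp S e1 t)).card : ℤ) ≤
      min ((σ.threads).card : ℤ) (max k 0) := by
  classical
  set t1 := σ.thread e1 with ht1
  set T := (σ.threads).filter (fun t => σ.Csmp S e2 t < σ.Csmp S e1 t) with hT
  have hcard1 : T.card ≤ σ.threads.card := Finset.card_le_card (Finset.filter_subset _ _)
  set A := Finset.univ.filter (fun f => σ.thread f = t1 ∧ σ.hb f e2) with hA
  have hufr1 : σ.VT S e1 ≤ σ.Ufr S e1 t1 := by
    exact Finset.le_sup (Finset.mem_filter.mpr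
      ⟨Finset.mem_univ _, rfl, Relation.ReflTransGen.refl⟩)
  have hmax : (T.card : ℤ) ≤ max k 0 := by
    by_cases hcase : ∃ f ∈ A, e1 ≤ f
    · -- then `e1 ≤HB e2`, so no thread increases
      obtain ⟨f, hfA, hef⟩ := hcase
      simp only [hA, Finset.mem_filter, Finset.mem_univ, true_and] at hfA
      have hhb : σ.hb e1 e2 :=
        Relation.ReflTransGen.trans (Execution.hb_of_tho ⟨hef, hfA.1.symm⟩) hfA.2
      have hT0 : T = ∅ := by
        apply Finset.filter_false_of_mem
        intro t _
        exact not_lt.mpr (Execution.csmp_mono hhb)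
      rw [hT0]
      simp
    · push_neg at hcase
      have hnat : σ.Ufr S e2 t1 + T.card ≤ σ.Ufr S e1 t1 := by
        rcases A.eq_empty_or_nonempty with hAe | hAne
        · have hz : σ.Ufr S e2 t1 = 0 := by
            have : σ.Ufr S e2 t1 = A.sup (σ.VT S) := rfl
            rw [this, hAe, Finset.sup_empty]
            rfl
          rw [hz, zero_add]
          refine le_trans ?_ hufr1
          have hle : T.card ≤ ∑ f ∈ Finset.univ.filter (fun f => σ.tho f e1),
              ((σ.threads).filter (fun t => σ.Csmp S f t ≠ σ.CsmpPrev S f t)).card := by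
            apply Execution.card_le_sum_updates
            intro t ht
            simp only [hT, Finset.mem_filter] at ht
            refine ⟨ht.1, ?_⟩
            have hne : σ.Csmp S e1 t ≠ 0 := by have := ht.2; omega
            obtain ⟨f, hf1, hf2⟩ := Execution.exists_update_of_ne_zero e1 t hne
            exact ⟨f, by simp [hf1], hf2⟩
          exact hle
        · set f0 := A.max' hAne with hf0
          have hf0A : f0 ∈ A := A.max'_mem hAne
          simp only [hA, Finset.mem_filter, Finset.mem_univ, true_and] at hf0A
          have hf0lt : f0 < e1 := hcase f0 (A.max'_mem hAne)
          have hf0tho : σ.sTho f0 e1 := ⟨hf0lt, hf0A.1⟩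
          have hufr2 : σ.Ufr S e2 t1 ≤ σ.VT S f0 := by
            apply Finset.sup_le
            intro f hf
            simp only [hA, Finset.mem_filter, Finset.mem_univ, true_and] at hf
            exact Execution.vt_mono ⟨Finset.le_max' A f (by simp [hA, hf]), hf.1.trans hf0A.1.symm⟩
          set D := Finset.univ.filter (fun f => f0 < f ∧ σ.tho f e1) with hD
          have hTD : T.card ≤ ∑ f ∈ D,
              ((σ.threads).filter (fun t => σ.Csmp S f t ≠ σ.CsmpPrev S f t)).card := by
            apply Execution.card_le_sum_updates
            intro t ht
            simp only [hT, Finset.mem_filter] at ht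
            refine ⟨ht.1, ?_⟩
            have hne : σ.Csmp S f0 t ≠ σ.Csmp S e1 t :=
              ne_of_lt (lt_of_le_of_lt (Execution.csmp_mono hf0A.2) ht.2)
            obtain ⟨f, hf1, hf2, hf3⟩ := Execution.exists_update_of_ne e1 f0 t hf0tho hne
            exact ⟨f, by simp [hD, hf1, hf2], hf3⟩
          have hsum : σ.VT S f0 + ∑ f ∈ D,
              ((σ.threads).filter (fun t => σ.Csmp S f t ≠ σ.CsmpPrev S f t)).card ≤ σ.VT S e1 := by
            set P0 := Finset.univ.filter (fun f => σ.tho f f0) with hP0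
            have hdisj : Disjoint P0 D := by
              rw [Finset.disjoint_left]
              intro f hfP0 hfD
              simp only [hP0, Finset.mem_filter, Finset.mem_univ, true_and] at hfP0
              simp only [hD, Finset.mem_filter, Finset.mem_univ, true_and] at hfD
              exact absurd hfP0.1 (not_le.mpr hfD.1)
            have hVT0 : σ.VT S f0 = ∑ f ∈ P0,
                ((σ.threads).filter (fun t => σ.Csmp S f t ≠ σ.CsmpPrev S f t)).card := rfl
            rw [hVT0, ← Finset.sum_union hdisj]
            apply Finset.sum_le_sum_of_subset
            intro f hf
            simp only [Finset.mem_union, hP0, hD, Finset.mem_filter, Finset.mem_univ,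
              true_and] at hf
            simp only [Finset.mem_filter, Finset.mem_univ, true_and]
            rcases hf with hf | hf
            · exact Execution.tho_trans hf ⟨le_of_lt hf0lt, hf0A.1⟩
            · exact hf.2
          calc σ.Ufr S e2 t1 + T.card ≤ σ.VT S f0 + ∑ f ∈ D,
                ((σ.threads).filter (fun t => σ.Csmp S f t ≠ σ.CsmpPrev S f t)).card :=
              Nat.add_le_add hufr2 hTD
            _ ≤ σ.VT S e1 := hsum
            _ ≤ σ.Ufr S e1 t1 := hufr1
      have : (T.card : ℤ) ≤ k := by
        rw [hk]
        have := hnat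
        push_cast
        omega
      exact le_trans this (le_max_left _ _)
  rw [le_min_iff]
  exact ⟨by exact_mod_cast hcard1, hmax⟩
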